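/- Let μ be a probability measure on a measurable space X, and let σ : ℝ → ℝ be Lipschitz with constant L > 0 and bounded by B ≥ 0. For each layer l = 1, …, N (N ≥ 1), let f_l : X → ℝ be μ-integrable and let g_l : X → ℝ be measurable with |g_l(x)| ≤ C for μ-almost every x (C > 0). Let w, v ∈ ℝ with |w| ≤ C_w, set K := (B + C·L·C_w)·Σ_{l=1}^{N} ∫ |f_l(x) − g_l(x)| dμ(x), and suppose the accuracy gap obeys the lower bound |Acc_e − Acc*| ≥ c·|w − v| for some constant c ≥ 0 (the accuracy–weight bound obtained in the paper from a second-order Taylor expansion of the loss around the optimum together with a reverse Jensen inequality). If Σ_{l=1}^{N} |Δ(f_l, w) − Δ(g_l, v)| ≥ ε for some ε ≥ K, then |Acc_e − Acc*| ≥ c·(ε − K)/(N·C²·L). In particular, as the total connectivity gap ε − K tends to 0, the guaranteed lower bound on the accuracy gap tends to 0, so maintaining the information flow within ε of the optimal information flow controls the accuracy deviation from the optimal network. -/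

import Mathlib

open MeasureTheory

/-- With `K := (B + C·L·C_w)·Σ_l ∫ |f_l − g_l| dμ`, if the accuracy
gap obeys `|Acc_e − Acc*| ≥ c·|w − v|` for some `c ≥ 0` and the total connectivity
difference `Σ_l |Δ(f_l, w) − Δ(g_l, v)|` is at least `ε ≥ K`, then
`|Acc_e − Acc*| ≥ c·(ε − K)/(N·C²·L)`: maintaining the information flow within `ε`
of the optimal information flow controls the accuracy deviation. -/
theorem accuracy_gap_from_connectivity_gap
    {X : Type*} [MeasurableSpace X] (μ : Measure X) [IsProbabilityMeasure μ]
    (σ : ℝ → ℝ) (L B C Cw w v ε c AccE AccStar : ℝ) (N : ℕ)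
    (hN : 1 ≤ N) (hL : 0 < L) (hB : 0 ≤ B) (hC : 0 < C) (hc : 0 ≤ c)
    (hLip : ∀ x y : ℝ, |σ x - σ y| ≤ L * |x - y|)
    (hBd : ∀ x : ℝ, |σ x| ≤ B)
    (f g : Fin N → X → ℝ)
    (hf : ∀ l, Integrable (f l) μ)
    (hgm : ∀ l, Measurable (g l))
    (hg : ∀ l, ∀ᵐ x ∂μ, |g l x| ≤ C)
    (hw : |w| ≤ Cw)
    (hAcc : c * |w - v| ≤ |AccE - AccStar|)
    (hεK : (B + C * L * Cw) * (∑ l : Fin N, ∫ x, |f l x - g l x| ∂μ) ≤ ε)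
    (hgap : ε ≤
      ∑ l : Fin N, |(∫ x, f l x * σ (w * f l x) ∂μ) - ∫ x, g l x * σ (v * g l x) ∂μ|) :
    c * (ε - (B + C * L * Cw) * (∑ l : Fin N, ∫ x, |f l x - g l x| ∂μ)) /
        ((N : ℝ) * C ^ 2 * L) ≤ |AccE - AccStar| := by
  have hCw : 0 ≤ Cw := le_trans (abs_nonneg w) hw
  have hσcont : Continuous σ := by
    have : LipschitzWith L.toNNReal σ := by
      apply LipschitzWith.of_dist_le_mul
      intro x y
      simpa [Real.dist_eq, Real.coe_toNNReal L hL.le] using hLip x y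
    exact this.continuous
  -- per-layer bound
  have key : ∀ l : Fin N,
      |(∫ x, f l x * σ (w * f l x) ∂μ) - ∫ x, g l x * σ (v * g l x) ∂μ|
        ≤ (B + C * L * Cw) * (∫ x, |f l x - g l x| ∂μ) + C ^ 2 * L * |w - v| := by
    intro l
    have hgint : Integrable (g l) μ := by
      apply Integrable.mono' (integrable_const C) (hgm l).aestronglyMeasurable
      filter_upwards [hg l] with x hx using hx
    have hfg : Integrable (fun x => |f l x - g l x|) μ := ((hf l).sub hgint).abs
    have hA : Integrable (fun x => f l x * σ (w * f l x)) μ := by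
      apply Integrable.mono' ((hf l).abs.const_mul B)
      · exact (hf l).aestronglyMeasurable.mul
          (hσcont.measurable.comp_aemeasurable
            ((hf l).aemeasurable.const_mul w)).aestronglyMeasurable
      · filter_upwards with x
        simp only [Real.norm_eq_abs, abs_mul]
        calc |f l x| * |σ (w * f l x)| ≤ |f l x| * B :=
              mul_le_mul_of_nonneg_left (hBd _) (abs_nonneg _)
          _ = B * |f l x| := mul_comm _ _
    have hB2 : Integrable (fun x => g l x * σ (v * g l x)) μ := by
      apply Integrable.mono' (integrable_const (C * B))
      · exact (hgm l).aestronglyMeasurable.mul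
          (hσcont.measurable.comp ((hgm l).const_mul v)).aestronglyMeasurable
      · filter_upwards [hg l] with x hx
        simp only [Real.norm_eq_abs, abs_mul]
        exact mul_le_mul hx (hBd _) (abs_nonneg _) hC.le
    rw [← integral_sub hA hB2]
    calc |∫ x, (f l x * σ (w * f l x) - g l x * σ (v * g l x)) ∂μ|
        ≤ ∫ x, |f l x * σ (w * f l x) - g l x * σ (v * g l x)| ∂μ :=
          by simpa [Real.norm_eq_abs] using
            norm_integral_le_integral_norm
              (fun x => f l x * σ (w * f l x) - g l x * σ (v * g l x))
      _ ≤ ∫ x, ((B + C * L * Cw) * |f l x - g l x| + C ^ 2 * L * |w - v|) ∂μ := by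
          apply integral_mono_ae ((hA.sub hB2).abs)
            ((hfg.const_mul _).add (integrable_const _))
          filter_upwards [hg l] with x hx
          simp only [Pi.sub_apply, Pi.add_apply]
          have e1 : f l x * σ (w * f l x) - g l x * σ (v * g l x)
              = (f l x - g l x) * σ (w * f l x)
                + g l x * (σ (w * f l x) - σ (w * g l x))
                + g l x * (σ (w * g l x) - σ (v * g l x)) := by ring
          rw [e1]
          have t1 : |(f l x - g l x) * σ (w * f l x)| ≤ B * |f l x - g l x| := by
            rw [abs_mul, mul_comm]
            exact mul_le_mul_of_nonneg_right (hBd _) (abs_nonneg _)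
          have t2 : |g l x * (σ (w * f l x) - σ (w * g l x))|
              ≤ C * L * Cw * |f l x - g l x| := by
            rw [abs_mul]
            calc |g l x| * |σ (w * f l x) - σ (w * g l x)|
                ≤ C * (L * |w * f l x - w * g l x|) :=
                  mul_le_mul hx (hLip _ _) (abs_nonneg _) hC.le
              _ = C * L * |w| * |f l x - g l x| := by
                  rw [← mul_sub, abs_mul]; ring
              _ ≤ C * L * Cw * |f l x - g l x| := by
                  apply mul_le_mul_of_nonneg_right _ (abs_nonneg _)
                  exact mul_le_mul_of_nonneg_left hw (by positivity)
          have t3 : |g l x * (σ (w * g l x) - σ (v * g l x))|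
              ≤ C ^ 2 * L * |w - v| := by
            rw [abs_mul]
            calc |g l x| * |σ (w * g l x) - σ (v * g l x)|
                ≤ C * (L * |w * g l x - v * g l x|) :=
                  mul_le_mul hx (hLip _ _) (abs_nonneg _) hC.le
              _ = C * L * |w - v| * |g l x| := by
                  rw [← sub_mul, abs_mul]; ring
              _ ≤ C * L * |w - v| * C := by
                  exact mul_le_mul_of_nonneg_left hx (by positivity)
              _ = C ^ 2 * L * |w - v| := by ring
          calc |(f l x - g l x) * σ (w * f l x)
                + g l x * (σ (w * f l x) - σ (w * g l x))
                + g l x * (σ (w * g l x) - σ (v * g l x))|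
              ≤ |(f l x - g l x) * σ (w * f l x)
                  + g l x * (σ (w * f l x) - σ (w * g l x))|
                + |g l x * (σ (w * g l x) - σ (v * g l x))| := abs_add_le _ _
            _ ≤ (|(f l x - g l x) * σ (w * f l x)|
                  + |g l x * (σ (w * f l x) - σ (w * g l x))|)
                + |g l x * (σ (w * g l x) - σ (v * g l x))| := by
                exact add_le_add (abs_add_le _ _) le_rfl
            _ ≤ (B * |f l x - g l x| + C * L * Cw * |f l x - g l x|)
                + C ^ 2 * L * |w - v| :=
                add_le_add (add_le_add t1 t2) t3
            _ = (B + C * L * Cw) * |f l x - g l x| + C ^ 2 * L * |w - v| := by ring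
      _ = (B + C * L * Cw) * (∫ x, |f l x - g l x| ∂μ) + C ^ 2 * L * |w - v| := by
          rw [integral_add (hfg.const_mul _) (integrable_const _),
            integral_const_mul, integral_const]
          simp
  -- sum the per-layer bounds
  have hsum : ε ≤ (B + C * L * Cw) * (∑ l : Fin N, ∫ x, |f l x - g l x| ∂μ)
      + (N : ℝ) * (C ^ 2 * L * |w - v|) := by
    calc ε ≤ ∑ l : Fin N, |(∫ x, f l x * σ (w * f l x) ∂μ)
            - ∫ x, g l x * σ (v * g l x) ∂μ| := hgap
      _ ≤ ∑ l : Fin N, ((B + C * L * Cw) * (∫ x, |f l x - g l x| ∂μ)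
            + C ^ 2 * L * |w - v|) := Finset.sum_le_sum fun l _ => key l
      _ = (B + C * L * Cw) * (∑ l : Fin N, ∫ x, |f l x - g l x| ∂μ)
            + (N : ℝ) * (C ^ 2 * L * |w - v|) := by
          rw [Finset.sum_add_distrib, ← Finset.mul_sum, Finset.sum_const]
          simp [mul_comm]
  have hD : 0 < (N : ℝ) * C ^ 2 * L := by positivity
  rw [div_le_iff₀ hD]
  calc c * (ε - (B + C * L * Cw) * (∑ l : Fin N, ∫ x, |f l x - g l x| ∂μ))
      ≤ c * ((N : ℝ) * (C ^ 2 * L * |w - v|)) :=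
        mul_le_mul_of_nonneg_left (by linarith) hc
    _ = (c * |w - v|) * ((N : ℝ) * C ^ 2 * L) := by ring
    _ ≤ |AccE - AccStar| * ((N : ℝ) * C ^ 2 * L) :=
        mul_le_mul_of_nonneg_right hAcc hD.le
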